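/- Let G be a finite simple graph and let d be a vertex of degree 1 in G with neighbor c. If d belongs to no minimum dominating set of G, then the edge cd is γ-critical, i.e., γ(G − cd) = γ(G) + 1; in particular the bondage number of G equals 1. -/
import Mathlib



open SimpleGraph

/-- `S` is a dominating set of `G`. -/
def IsDomSet {V : Type*} (G : SimpleGraph V) (S : Finset V) : Prop :=
  ∀ v : V, v ∈ S ∨ ∃ u ∈ S, G.Adj u v

/-- The domination number `γ(G)`. -/
noncomputable def domNum {V : Type*} (G : SimpleGraph V) : ℕ :=
  sInf {n | ∃ S : Finset V, IsDomSet G S ∧ S.card = n}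

/-- `C` is a vertex cover of `G`. -/
def IsVC {V : Type*} (G : SimpleGraph V) (C : Finset V) : Prop :=
  ∀ e ∈ G.edgeSet, ∃ x ∈ C, x ∈ e

/-- The vertex cover number `τ(G)`. -/
noncomputable def tau {V : Type*} (G : SimpleGraph V) : ℕ :=
  sInf {n | ∃ C : Finset V, IsVC G C ∧ C.card = n}

/-- `S` is an independent set of `G`. -/
def IsIndep {V : Type*} (G : SimpleGraph V) (S : Finset V) : Prop :=
  ∀ a ∈ S, ∀ b ∈ S, ¬ G.Adj a b

/-- The independence number `α(G)`. -/
noncomputable def indepNum {V : Type*} (G : SimpleGraph V) : ℕ :=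
  sSup {n | ∃ S : Finset V, IsIndep G S ∧ S.card = n}

/-- The bondage number `b(G)`. -/
noncomputable def bondage {V : Type*} (G : SimpleGraph V) : ℕ :=
  sInf {n | ∃ E' : Finset (Sym2 V), ↑E' ⊆ G.edgeSet ∧ E'.card = n ∧
    domNum (G.deleteEdges ↑E') = domNum G + 1}

/-- The graph `G_v+u` obtained from `G` by adding one new vertex (`none`) adjacent only to `v`. -/
def addLeaf {V : Type*} (G : SimpleGraph V) (v : V) : SimpleGraph (Option V) :=
  SimpleGraph.fromRel (fun x y =>
    (∃ a b, x = some a ∧ y = some b ∧ G.Adj a b) ∨ (x = some v ∧ y = none))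

/-- The graph `G_A+` obtained from `G` by adding, for each `v ∈ A`, one new pendant
vertex adjacent only to `v`. -/
def addLeaves {V : Type*} (G : SimpleGraph V) (A : Finset V) :
    SimpleGraph (V ⊕ {x // x ∈ A}) :=
  SimpleGraph.fromRel (fun x y =>
    (∃ a b, x = Sum.inl a ∧ y = Sum.inl b ∧ G.Adj a b) ∨
    (∃ a : {x // x ∈ A}, x = Sum.inl a.1 ∧ y = Sum.inr a))

/-- The `3`-subdivision of the edge `uv` of `G`: the edge `uv` is deleted, three new
vertices `u' = Sum.inr 0`, `w = Sum.inr 1`, `v' = Sum.inr 2` are added, together with the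
four edges `u u'`, `u' w`, `w v'`, `v' v`. -/
def subdiv3 {V : Type*} (G : SimpleGraph V) (u v : V) : SimpleGraph (V ⊕ Fin 3) :=
  SimpleGraph.fromRel (fun x y =>
    match x, y with
    | Sum.inl a, Sum.inl b => G.Adj a b ∧ s(a, b) ≠ s(u, v)
    | Sum.inl a, Sum.inr i => (a = u ∧ i = 0) ∨ (a = v ∧ i = 2)
    | Sum.inr i, Sum.inr j => (i = 0 ∧ j = 1) ∨ (i = 1 ∧ j = 2)
    | _, _ => False)


lemma domSet_nonempty {V : Type*} [Fintype V] (G : SimpleGraph V) :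
    {n | ∃ S : Finset V, IsDomSet G S ∧ S.card = n}.Nonempty :=
  ⟨Finset.univ.card, Finset.univ, fun v => Or.inl (Finset.mem_univ v), rfl⟩

lemma exists_min_domSet {V : Type*} [Fintype V] (G : SimpleGraph V) :
    ∃ S : Finset V, IsDomSet G S ∧ S.card = domNum G :=
  Nat.sInf_mem (domSet_nonempty G)

lemma domNum_le {V : Type*} [Fintype V] (G : SimpleGraph V) (S : Finset V)
    (hS : IsDomSet G S) : domNum G ≤ S.card :=
  Nat.sInf_le ⟨S, hS, rfl⟩

/-- If `d` is a vertex of degree `1` with neighbor `c`, and `d` belongs to no minimum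
dominating set of `G`, then the edge `cd` is `γ`-critical; in particular `b(G) = 1`. -/
theorem stmt12 {V : Type*} [Fintype V] [DecidableEq V] (G : SimpleGraph V)
    [DecidableRel G.Adj] (c d : V) (hadj : G.Adj c d) (hdeg : G.degree d = 1)
    (h : ∀ S : Finset V, IsDomSet G S → S.card = domNum G → d ∉ S) :
    domNum (G.deleteEdges {s(c, d)}) = domNum G + 1 ∧ bondage G = 1 := by
  classical
  set G' := G.deleteEdges {s(c, d)} with hG'
  -- the unique neighbor of d is c
  have huniq : ∀ u, G.Adj u d → u = c := by
    intro u hu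
    have hcard : (G.neighborFinset d).card = 1 := hdeg
    obtain ⟨a, ha⟩ := Finset.card_eq_one.mp hcard
    have hc : c ∈ G.neighborFinset d := (SimpleGraph.mem_neighborFinset _ _ _).mpr hadj.symm
    have hu' : u ∈ G.neighborFinset d := (SimpleGraph.mem_neighborFinset _ _ _).mpr hu.symm
    rw [ha, Finset.mem_singleton] at hc hu'
    rw [hu', hc]
  have hG'adj : ∀ a b, G'.Adj a b ↔ G.Adj a b ∧ s(a, b) ≠ s(c, d) := by
    intro a b
    rw [hG', SimpleGraph.deleteEdges_adj]
    simp
  -- d is isolated in G'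
  have hiso : ∀ u, ¬ G'.Adj u d := by
    intro u hu
    rw [hG'adj] at hu
    have := huniq u hu.1
    subst this
    exact hu.2 rfl
  -- key: γ(G') = γ(G) + 1
  have hmain : domNum G' = domNum G + 1 := by
    obtain ⟨S, hS, hScard⟩ := exists_min_domSet G
    have hdS : d ∉ S := h S hS hScard
    have hcS : c ∈ S := by
      rcases hS d with hd | ⟨u, hu, huadj⟩
      · exact absurd hd hdS
      · rw [huniq u huadj] at hu; exact hu
    -- upper bound: insert d S dominates G'
    have hup : domNum G' ≤ domNum G + 1 := by
      have hdom : IsDomSet G' (insert d S) := by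
        intro v
        by_cases hv : v = d
        · exact Or.inl (hv ▸ Finset.mem_insert_self d S)
        · rcases hS v with hvS | ⟨u, hu, huadj⟩
          · exact Or.inl (Finset.mem_insert_of_mem hvS)
          · refine Or.inr ⟨u, Finset.mem_insert_of_mem hu, ?_⟩
            rw [hG'adj]
            refine ⟨huadj, ?_⟩
            intro heq
            rw [Sym2.eq_iff] at heq
            rcases heq with ⟨_, h2⟩ | ⟨h1, _⟩
            · exact hv h2
            · rw [h1] at hu; exact hdS hu
      have := domNum_le G' (insert d S) hdom
      rwa [Finset.card_insert_of_notMem hdS, hScard] at this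
    -- lower bound
    obtain ⟨T, hT, hTcard⟩ := exists_min_domSet G'
    have hTG : IsDomSet G T := by
      intro v
      rcases hT v with hv | ⟨u, hu, huadj⟩
      · exact Or.inl hv
      · exact Or.inr ⟨u, hu, ((hG'adj u v).mp huadj).1⟩
    have hle : domNum G ≤ domNum G' := hTcard ▸ domNum_le G T hTG
    have hdT : d ∈ T := by
      rcases hT d with hv | ⟨u, hu, huadj⟩
      · exact hv
      · exact absurd huadj (hiso u)
    have hne : domNum G' ≠ domNum G := by
      intro heq
      exact h T hTG (hTcard.trans heq) hdT
    omega
  refine ⟨hmain, ?_⟩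
  -- bondage = 1
  have h1 : 1 ∈ {n | ∃ E' : Finset (Sym2 V), ↑E' ⊆ G.edgeSet ∧ E'.card = n ∧
      domNum (G.deleteEdges ↑E') = domNum G + 1} := by
    refine ⟨{s(c, d)}, ?_, Finset.card_singleton _, ?_⟩
    · intro e he
      rw [Finset.coe_singleton, Set.mem_singleton_iff] at he
      rw [he, SimpleGraph.mem_edgeSet]
      exact hadj
    · rw [Finset.coe_singleton]
      exact hmain
  have h0 : 0 ∉ {n | ∃ E' : Finset (Sym2 V), ↑E' ⊆ G.edgeSet ∧ E'.card = n ∧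
      domNum (G.deleteEdges ↑E') = domNum G + 1} := by
    rintro ⟨E', -, hcard0, heq⟩
    rw [Finset.card_eq_zero] at hcard0
    subst hcard0
    rw [Finset.coe_empty, SimpleGraph.deleteEdges_empty] at heq
    omega
  have hle1 : bondage G ≤ 1 := Nat.sInf_le h1
  have hne0 : bondage G ≠ 0 := by
    intro hz
    rw [bondage, Nat.sInf_eq_zero] at hz
    rcases hz with hz | hz
    · exact h0 hz
    · rw [hz] at h1; exact h1
  omega
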